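/- Star consistency radius is a lower bound for consistency radius: if a is an assignment supported on the stars of a sheaf S of pseudometric spaces on an Alexandrov space X, then for every open U ⊆ X, c*_S(a,U) ≤ c_S(a,U), where c*_S(a,U) is the maximum of (i) sup over y ∈ U and x ∈ star y of d_{star x}(S(star x ⊆ star y) a(star y), a(star x)) and (ii) sup over x,y ∈ U and z ∈ star x ∩ star y of (1/2)·d_{star z}(S(star z ⊆ star y) a(star y), S(star z ⊆ star x) a(star x)). -/

import Mathlib

open TopologicalSpace ENNReal

universe u v

/-- A sheaf of pseudometric spaces on a topological space, presented by its
stalks `F U` (pseudometric spaces) and continuous restriction maps. -/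
structure ResSystem (X : Type u) [TopologicalSpace X] (F : Opens X → Type v)
    [∀ U, PseudoMetricSpace (F U)] where
  res : ∀ {U V : Opens X}, U ≤ V → F V → F U
  res_id : ∀ (U : Opens X) (x : F U), res le_rfl x = x
  res_comp : ∀ {U V W : Opens X} (hUV : U ≤ V) (hVW : V ≤ W) (x : F W),
    res (hUV.trans hVW) x = res hUV (res hVW x)
  res_cont : ∀ {U V : Opens X} (h : U ≤ V), Continuous (res h)

variable {X : Type u} [TopologicalSpace X] {F : Opens X → Type v} [∀ U, PseudoMetricSpace (F U)]

/-- Consistency radius of an assignment. -/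
noncomputable def ResSystem.crad (S : ResSystem X F) (a : ∀ U, F U) : ℝ≥0∞ :=
  ⨆ (U : Opens X) (V : Opens X) (h : U ≤ V), edist (S.res h (a V)) (a U)

/-- Local consistency radius of an assignment on an open set `W`. -/
noncomputable def ResSystem.lcrad (S : ResSystem X F) (a : ∀ U, F U) (W : Opens X) : ℝ≥0∞ :=
  ⨆ (U : Opens X) (V : Opens X) (_ : V ≤ W) (h : U ≤ V), edist (S.res h (a V)) (a U)

/-- An assignment is a global section when it is compatible with all restrictions. -/
def ResSystem.IsGlobalSection (S : ResSystem X F) (s : ∀ U, F U) : Prop :=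
  ∀ {U V : Opens X} (h : U ≤ V), S.res h (s V) = s U

variable [AlexandrovDiscrete X]

/-- The star of a point: the smallest open set containing it. -/
def ptStar (x : X) : Opens X := ⟨nhdsKer {x}, isOpen_nhdsKer⟩

theorem mem_ptStar (x : X) : x ∈ ptStar x := subset_nhdsKer rfl

theorem ptStar_le {x y : X} (h : x ∈ ptStar y) : ptStar x ≤ ptStar y :=
  (ptStar y).2.nhdsKer_subset.mpr (Set.singleton_subset_iff.mpr h)

theorem ptStar_le_of_mem {x : X} {U : Opens X} (h : x ∈ U) : ptStar x ≤ U :=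
  U.2.nhdsKer_subset.mpr (Set.singleton_subset_iff.mpr h)

/-- The star consistency radius is a lower bound for the local consistency radius:
`c*_S(a,U) ≤ c_S(a,U)`, where `c*_S(a,U)` is the max of the radius-type term over stars
and half the diameter-type term over pairs of stars. -/
theorem star_crad_le_lcrad (S : ResSystem X F) (a : ∀ U, F U) (U : Opens X) :
    max
      (⨆ (y : X) (_ : y ∈ U) (x : X) (hx : x ∈ ptStar y),
        edist (S.res (ptStar_le hx) (a (ptStar y))) (a (ptStar x)))
      (⨆ (y : X) (_ : y ∈ U) (x : X) (_ : x ∈ U) (z : X)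
          (hzx : z ∈ ptStar x) (hzy : z ∈ ptStar y),
        edist (S.res (ptStar_le hzy) (a (ptStar y)))
              (S.res (ptStar_le hzx) (a (ptStar x))) / 2)
    ≤ S.lcrad a U := by
  have key : ∀ {V W : Opens X}, W ≤ U → ∀ (h : V ≤ W),
      edist (S.res h (a W)) (a V) ≤ S.lcrad a U := by
    intro V W hWU h
    exact le_iSup_of_le V (le_iSup_of_le W (le_iSup_of_le hWU (le_iSup (fun h => edist (S.res h (a W)) (a V)) h)))
  apply max_le
  · refine iSup₂_le fun y hy => iSup₂_le fun x hx => ?_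
    exact key (ptStar_le_of_mem hy) (ptStar_le hx)
  · refine iSup₂_le fun y hy => iSup₂_le fun x hx => iSup_le fun z =>
      iSup_le fun hzx => iSup_le fun hzy => ?_
    rw [ENNReal.div_le_iff two_ne_zero ENNReal.ofNat_ne_top]
    calc edist (S.res (ptStar_le hzy) (a (ptStar y))) (S.res (ptStar_le hzx) (a (ptStar x)))
        ≤ edist (S.res (ptStar_le hzy) (a (ptStar y))) (a (ptStar z))
          + edist (S.res (ptStar_le hzx) (a (ptStar x))) (a (ptStar z)) :=
          edist_triangle_right _ _ _
      _ ≤ S.lcrad a U + S.lcrad a U :=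
          add_le_add (key (ptStar_le_of_mem hy) (ptStar_le hzy))
            (key (ptStar_le_of_mem hx) (ptStar_le hzx))
      _ = S.lcrad a U * 2 := by rw [mul_two]
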